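/- Let F = ⟨W,R⁺,R⁻⟩ be a bi-relational fuzzy frame, let v be a KGinv(2)-valuation on F, and define a KGbl-model on F by v₁(p,u) = v(p,u) and v₂(p,u) = v(p*,u) for all p ∈ Prop and u ∈ W. Then for every χ ∈ Lbl and every u ∈ W: v(χ⊕,u) = v₁(χ,u) and v(χ⊖,u) = v₂(χ,u). Conversely, given any KGbl-model ⟨v₁,v₂⟩ on F, defining the KGinv(2)-valuation v by v(p,u) = v₁(p,u) and v(p*,u) = v₂(p,u) yields the same equalities for every χ ∈ Lbl and u ∈ W. -/
import Mathlib



noncomputable def Gimp (x y : ℝ) : ℝ := if x ≤ y then 1 else y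

inductive Fml2 : Type
  | var : ℕ → Fml2
  | inv : Fml2 → Fml2
  | and : Fml2 → Fml2 → Fml2
  | imp : Fml2 → Fml2 → Fml2
  | box1 : Fml2 → Fml2
  | dia1 : Fml2 → Fml2
  | box2 : Fml2 → Fml2
  | dia2 : Fml2 → Fml2

noncomputable def Fml2.eval {W : Type} (Rp Rm : W → W → ℝ) (v : ℕ → W → ℝ) : Fml2 → W → ℝ
  | .var p, w => v p w
  | .inv φ, w => 1 - Fml2.eval Rp Rm v φ w
  | .and φ χ, w => min (Fml2.eval Rp Rm v φ w) (Fml2.eval Rp Rm v χ w)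
  | .imp φ χ, w => Gimp (Fml2.eval Rp Rm v φ w) (Fml2.eval Rp Rm v χ w)
  | .box1 φ, w => sInf (Set.range fun w' => Gimp (Rp w w') (Fml2.eval Rp Rm v φ w'))
  | .dia1 φ, w => sSup (Set.range fun w' => min (Rp w w') (Fml2.eval Rp Rm v φ w'))
  | .box2 φ, w => sInf (Set.range fun w' => Gimp (Rm w w') (Fml2.eval Rp Rm v φ w'))
  | .dia2 φ, w => sSup (Set.range fun w' => min (Rm w w') (Fml2.eval Rp Rm v φ w'))

inductive Lbl : Type
  | var : ℕ → Lbl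
  | neg : Lbl → Lbl
  | and : Lbl → Lbl → Lbl
  | imp : Lbl → Lbl → Lbl
  | box : Lbl → Lbl
  | dia : Lbl → Lbl
  | conf : Lbl → Lbl
  | sAnd : Lbl → Lbl → Lbl
  | sImp : Lbl → Lbl → Lbl
  | bbox : Lbl → Lbl
  | bdia : Lbl → Lbl

noncomputable def Lbl.eval {W : Type} (Rp Rm : W → W → ℝ) (v1 v2 : ℕ → W → ℝ) :
    Lbl → W → ℝ × ℝ
  | .var p, w => (v1 p w, v2 p w)
  | .neg φ, w => ((Lbl.eval Rp Rm v1 v2 φ w).2, (Lbl.eval Rp Rm v1 v2 φ w).1)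
  | .conf φ, w => (1 - (Lbl.eval Rp Rm v1 v2 φ w).2, 1 - (Lbl.eval Rp Rm v1 v2 φ w).1)
  | .and φ χ, w =>
      (min (Lbl.eval Rp Rm v1 v2 φ w).1 (Lbl.eval Rp Rm v1 v2 χ w).1,
       max (Lbl.eval Rp Rm v1 v2 φ w).2 (Lbl.eval Rp Rm v1 v2 χ w).2)
  | .imp φ χ, w =>
      (Gimp (Lbl.eval Rp Rm v1 v2 φ w).1 (Lbl.eval Rp Rm v1 v2 χ w).1,
       if (Lbl.eval Rp Rm v1 v2 χ w).2 ≤ (Lbl.eval Rp Rm v1 v2 φ w).2 then 0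
       else (Lbl.eval Rp Rm v1 v2 χ w).2)
  | .sAnd φ χ, w =>
      (min (Lbl.eval Rp Rm v1 v2 φ w).1 (Lbl.eval Rp Rm v1 v2 χ w).1,
       min (Lbl.eval Rp Rm v1 v2 φ w).2 (Lbl.eval Rp Rm v1 v2 χ w).2)
  | .sImp φ χ, w =>
      (Gimp (Lbl.eval Rp Rm v1 v2 φ w).1 (Lbl.eval Rp Rm v1 v2 χ w).1,
       Gimp (Lbl.eval Rp Rm v1 v2 φ w).2 (Lbl.eval Rp Rm v1 v2 χ w).2)
  | .box φ, w =>
      (sInf (Set.range fun w' => Gimp (Rp w w') (Lbl.eval Rp Rm v1 v2 φ w').1),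
       sSup (Set.range fun w' => min (Rm w w') (Lbl.eval Rp Rm v1 v2 φ w').2))
  | .dia φ, w =>
      (sSup (Set.range fun w' => min (Rp w w') (Lbl.eval Rp Rm v1 v2 φ w').1),
       sInf (Set.range fun w' => Gimp (Rm w w') (Lbl.eval Rp Rm v1 v2 φ w').2))
  | .bbox φ, w =>
      (sInf (Set.range fun w' => Gimp (Rp w w') (Lbl.eval Rp Rm v1 v2 φ w').1),
       sInf (Set.range fun w' => Gimp (Rm w w') (Lbl.eval Rp Rm v1 v2 φ w').2))
  | .bdia φ, w =>
      (sSup (Set.range fun w' => min (Rp w w') (Lbl.eval Rp Rm v1 v2 φ w').1),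
       sSup (Set.range fun w' => min (Rm w w') (Lbl.eval Rp Rm v1 v2 φ w').2))

/-- KGinv(2)-validity on a pointed frame. -/
def Valid2 {W : Type} (Rp Rm : W → W → ℝ) (φ : Fml2) (w : W) : Prop :=
  ∀ v : ℕ → W → ℝ, (∀ p u, v p u ∈ Set.Icc (0:ℝ) 1) → Fml2.eval Rp Rm v φ w = 1

/-- v₁-validity on a pointed frame. -/
def V1Valid {W : Type} (Rp Rm : W → W → ℝ) (φ : Lbl) (w : W) : Prop :=
  ∀ v1 v2 : ℕ → W → ℝ, (∀ p u, v1 p u ∈ Set.Icc (0:ℝ) 1) →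
    (∀ p u, v2 p u ∈ Set.Icc (0:ℝ) 1) → (Lbl.eval Rp Rm v1 v2 φ w).1 = 1

/-- v₂-validity on a pointed frame. -/
def V2Valid {W : Type} (Rp Rm : W → W → ℝ) (φ : Lbl) (w : W) : Prop :=
  ∀ v1 v2 : ℕ → W → ℝ, (∀ p u, v1 p u ∈ Set.Icc (0:ℝ) 1) →
    (∀ p u, v2 p u ∈ Set.Icc (0:ℝ) 1) → (Lbl.eval Rp Rm v1 v2 φ w).2 = 0

/-- Strong validity on a pointed frame. -/
def StrongValid {W : Type} (Rp Rm : W → W → ℝ) (φ : Lbl) (w : W) : Prop :=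
  V1Valid Rp Rm φ w ∧ V2Valid Rp Rm φ w

def Fml2.or (φ χ : Fml2) : Fml2 := .inv (.and (.inv φ) (.inv χ))
def Fml2.coimp (φ χ : Fml2) : Fml2 := .inv (.imp (.inv χ) (.inv φ))
def Fml2.One : Fml2 := .imp (.var 0) (.var 0)
def Fml2.Zero : Fml2 := .inv Fml2.One
def Fml2.snot (φ : Fml2) : Fml2 := .imp φ Fml2.Zero

/-- The pair of translations (⊕, ⊖) : Lbl → L_inv(2); a variable p is encoded as
`var (2*p)` and its fresh copy p* as `var (2*p+1)`. -/
def Lbl.tr : Lbl → Fml2 × Fml2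
  | .var p => (.var (2*p), .var (2*p+1))
  | .neg φ => (φ.tr.2, φ.tr.1)
  | .conf φ => (.inv φ.tr.2, .inv φ.tr.1)
  | .and φ χ => (.and φ.tr.1 χ.tr.1, Fml2.or φ.tr.2 χ.tr.2)
  | .sAnd φ χ => (.and φ.tr.1 χ.tr.1, .and φ.tr.2 χ.tr.2)
  | .imp φ χ => (.imp φ.tr.1 χ.tr.1, Fml2.coimp χ.tr.2 φ.tr.2)
  | .sImp φ χ => (.imp φ.tr.1 χ.tr.1, .imp φ.tr.2 χ.tr.2)
  | .box φ => (.box1 φ.tr.1, .dia2 φ.tr.2)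
  | .dia φ => (.dia1 φ.tr.1, .box2 φ.tr.2)
  | .bbox φ => (.box1 φ.tr.1, .box2 φ.tr.2)
  | .bdia φ => (.dia1 φ.tr.1, .dia2 φ.tr.2)

/-- The ⊕ translation. -/
def Lbl.pos (φ : Lbl) : Fml2 := φ.tr.1
/-- The ⊖ translation. -/
def Lbl.negt (φ : Lbl) : Fml2 := φ.tr.2

private lemma one_sub_min (a b : ℝ) : 1 - min (1-a) (1-b) = max a b := by
  simp only [min_def, max_def]; split_ifs <;> linarith

private lemma coimp_eq (a b : ℝ) : 1 - Gimp (1-a) (1-b) = if b ≤ a then 0 else b := by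
  unfold Gimp; split_ifs <;> linarith

private lemma key {W : Type} (Rp Rm : W → W → ℝ) (v v1 v2 : ℕ → W → ℝ)
    (h1 : ∀ p u, v (2*p) u = v1 p u) (h2 : ∀ p u, v (2*p+1) u = v2 p u) :
    ∀ (χ : Lbl) (u : W),
      Fml2.eval Rp Rm v χ.tr.1 u = (Lbl.eval Rp Rm v1 v2 χ u).1 ∧
      Fml2.eval Rp Rm v χ.tr.2 u = (Lbl.eval Rp Rm v1 v2 χ u).2 := by
  intro χ
  induction χ with
  | var p => intro u; simp [Lbl.tr, Fml2.eval, Lbl.eval, h1, h2]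
  | neg φ ih =>
      intro u
      simp only [Lbl.tr, Lbl.eval]
      exact ⟨(ih u).2, (ih u).1⟩
  | conf φ ih =>
      intro u
      simp only [Lbl.tr, Lbl.eval, Fml2.eval]
      rw [(ih u).1, (ih u).2]; exact ⟨rfl, rfl⟩
  | and φ χ ihφ ihχ =>
      intro u
      simp only [Lbl.tr, Lbl.eval, Fml2.eval, Fml2.or]
      rw [(ihφ u).1, (ihχ u).1, (ihφ u).2, (ihχ u).2]
      exact ⟨rfl, one_sub_min _ _⟩
  | sAnd φ χ ihφ ihχ =>
      intro u
      simp only [Lbl.tr, Lbl.eval, Fml2.eval]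
      rw [(ihφ u).1, (ihχ u).1, (ihφ u).2, (ihχ u).2]
      exact ⟨rfl, rfl⟩
  | imp φ χ ihφ ihχ =>
      intro u
      simp only [Lbl.tr, Lbl.eval, Fml2.eval, Fml2.coimp]
      rw [(ihφ u).1, (ihχ u).1, (ihφ u).2, (ihχ u).2]
      exact ⟨rfl, coimp_eq _ _⟩
  | sImp φ χ ihφ ihχ =>
      intro u
      simp only [Lbl.tr, Lbl.eval, Fml2.eval]
      rw [(ihφ u).1, (ihχ u).1, (ihφ u).2, (ihχ u).2]
      exact ⟨rfl, rfl⟩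
  | box φ ih =>
      intro u
      simp only [Lbl.tr, Lbl.eval, Fml2.eval]
      constructor
      · exact congrArg _ (congrArg Set.range (funext fun w' => by rw [(ih w').1]))
      · exact congrArg _ (congrArg Set.range (funext fun w' => by rw [(ih w').2]))
  | dia φ ih =>
      intro u
      simp only [Lbl.tr, Lbl.eval, Fml2.eval]
      constructor
      · exact congrArg _ (congrArg Set.range (funext fun w' => by rw [(ih w').1]))
      · exact congrArg _ (congrArg Set.range (funext fun w' => by rw [(ih w').2]))
  | bbox φ ih =>
      intro u
      simp only [Lbl.tr, Lbl.eval, Fml2.eval]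
      constructor
      · exact congrArg _ (congrArg Set.range (funext fun w' => by rw [(ih w').1]))
      · exact congrArg _ (congrArg Set.range (funext fun w' => by rw [(ih w').2]))
  | bdia φ ih =>
      intro u
      simp only [Lbl.tr, Lbl.eval, Fml2.eval]
      constructor
      · exact congrArg _ (congrArg Set.range (funext fun w' => by rw [(ih w').1]))
      · exact congrArg _ (congrArg Set.range (funext fun w' => by rw [(ih w').2]))

/-- The translations ⊕ and ⊖ are semantically faithful, in both directions. -/
theorem statement12 {W : Type} [Nonempty W] (Rp Rm : W → W → ℝ)
    (hRp : ∀ w w', Rp w w' ∈ Set.Icc (0:ℝ) 1)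
    (hRm : ∀ w w', Rm w w' ∈ Set.Icc (0:ℝ) 1) :
    (∀ v : ℕ → W → ℝ, (∀ p u, v p u ∈ Set.Icc (0:ℝ) 1) →
       ∀ (χ : Lbl) (u : W),
         Fml2.eval Rp Rm v χ.pos u =
           (Lbl.eval Rp Rm (fun p u => v (2*p) u) (fun p u => v (2*p+1) u) χ u).1 ∧
         Fml2.eval Rp Rm v χ.negt u =
           (Lbl.eval Rp Rm (fun p u => v (2*p) u) (fun p u => v (2*p+1) u) χ u).2) ∧
    (∀ v1 v2 : ℕ → W → ℝ, (∀ p u, v1 p u ∈ Set.Icc (0:ℝ) 1) →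
       (∀ p u, v2 p u ∈ Set.Icc (0:ℝ) 1) →
       ∀ (χ : Lbl) (u : W),
         Fml2.eval Rp Rm (fun n u => if n % 2 = 0 then v1 (n/2) u else v2 (n/2) u)
             χ.pos u = (Lbl.eval Rp Rm v1 v2 χ u).1 ∧
         Fml2.eval Rp Rm (fun n u => if n % 2 = 0 then v1 (n/2) u else v2 (n/2) u)
             χ.negt u = (Lbl.eval Rp Rm v1 v2 χ u).2) := by
  constructor
  · intro v _ χ u
    simp only [Lbl.pos, Lbl.negt]
    exact key Rp Rm v _ _ (fun p u => rfl) (fun p u => rfl) χ u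
  · intro v1 v2 _ _ χ u
    simp only [Lbl.pos, Lbl.negt]
    refine key Rp Rm _ v1 v2 (fun p u => ?_) (fun p u => ?_) χ u
    · simp [Nat.mul_mod_right]
    · have h1 : (2*p+1) % 2 = 1 := by omega
      have h2 : (2*p+1) / 2 = p := by omega
      simp [h1, h2]
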